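/- (Descent inequality for projected gradient with inexact gradients.) Let \(J : \mathbb{R}^d \to \mathbb{R}\) be differentiable with L-Lipschitz gradient and \(\|\nabla J\| \le L\) on \(\Theta\), let \(\Theta\) be nonempty closed convex, \(\theta_k \in \Theta\), \(\alpha_k > 0\), \(g_k \in \mathbb{R}^d\) an arbitrary gradient estimate, and set \(\theta_{k+1} = \Pi_\Theta(\theta_k + \alpha_k g_k)\). Then \(J(\theta_k) - J(\theta_{k+1}) \le L\alpha_k \|\nabla J(\theta_k) - g_k\| - \alpha_k \|\mathcal{P}_\Theta(\theta_k, \nabla J(\theta_k), \alpha_k)\|^2 + \frac{L \alpha_k^2}{2}\|g_k\|^2\). -/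

import Mathlib

open InnerProductSpace

/-- Standard descent lemma: if `∇J` is `L`-Lipschitz then
`J x - J y ≤ -⟪∇J x, y - x⟫ + L/2 ‖y - x‖²`. -/
lemma descent_lemma_aux {d : ℕ} (J : EuclideanSpace ℝ (Fin d) → ℝ)
    (hJ : Differentiable ℝ J) (L : ℝ) (hL : 0 < L)
    (hlip : ∀ x y, ‖gradient J x - gradient J y‖ ≤ L * ‖x - y‖)
    (x y : EuclideanSpace ℝ (Fin d)) :
    J x - J y ≤ -(inner ℝ (gradient J x) (y - x) : ℝ) + L / 2 * ‖y - x‖ ^ 2 := by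
  set v := y - x with hv
  have hc : ∀ t : ℝ, HasDerivAt (fun t : ℝ => x + t • v) v t := by
    intro t
    simpa using ((hasDerivAt_id t).smul_const v).const_add x
  have hJ' : ∀ t : ℝ, HasDerivAt (fun t : ℝ => J (x + t • v))
      (inner ℝ (gradient J (x + t • v)) v : ℝ) t := by
    intro t
    have h1 := (hJ (x + t • v)).hasGradientAt.hasFDerivAt.comp_hasDerivAt t (hc t)
    simpa [Function.comp_def] using h1
  set h : ℝ → ℝ := fun t => J (x + t • v) - t * (inner ℝ (gradient J x) v : ℝ)
      + L * t ^ 2 * ‖v‖ ^ 2 / 2 with hdef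
  have hh : ∀ t : ℝ, HasDerivAt h
      ((inner ℝ (gradient J (x + t • v)) v : ℝ) - (inner ℝ (gradient J x) v : ℝ)
        + L * (2 * t) * ‖v‖ ^ 2 / 2) t := by
    intro t
    have h2 : HasDerivAt (fun t : ℝ => t * (inner ℝ (gradient J x) v : ℝ))
        (inner ℝ (gradient J x) v : ℝ) t := hasDerivAt_mul_const _
    have h3 : HasDerivAt (fun t : ℝ => L * t ^ 2 * ‖v‖ ^ 2 / 2)
        (L * (2 * t) * ‖v‖ ^ 2 / 2) t := by
      have := (((hasDerivAt_pow 2 t).const_mul L).mul_const (‖v‖ ^ 2)).div_const 2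
      simpa [mul_comm, mul_assoc, mul_left_comm] using this
    exact ((hJ' t).sub h2).add h3
  have hmono : MonotoneOn h (Set.Icc (0 : ℝ) 1) := by
    apply monotoneOn_of_deriv_nonneg (convex_Icc 0 1)
    · exact (Continuous.continuousOn (by
        have : Differentiable ℝ h := fun t => (hh t).differentiableAt
        exact this.continuous))
    · intro t ht
      exact (hh t).differentiableAt.differentiableWithinAt
    · intro t ht
      rw [interior_Icc] at ht
      rw [(hh t).deriv]
      have hdist : ‖(x + t • v) - x‖ = t * ‖v‖ := by
        rw [add_sub_cancel_left, norm_smul, Real.norm_eq_abs, abs_of_pos ht.1]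
      have h1 : ‖gradient J (x + t • v) - gradient J x‖ ≤ L * (t * ‖v‖) := by
        have := hlip (x + t • v) x
        rwa [hdist] at this
      have h2 : |(inner ℝ (gradient J (x + t • v) - gradient J x) v : ℝ)| ≤
          ‖gradient J (x + t • v) - gradient J x‖ * ‖v‖ := abs_real_inner_le_norm _ _
      have h3 : (inner ℝ (gradient J (x + t • v) - gradient J x) v : ℝ)
          = (inner ℝ (gradient J (x + t • v)) v : ℝ) - (inner ℝ (gradient J x) v : ℝ) :=
        inner_sub_left _ _ _
      have hn : (0:ℝ) ≤ ‖v‖ := norm_nonneg _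
      nlinarith [abs_le.mp h2, norm_nonneg (gradient J (x + t • v) - gradient J x)]
  have h01 : h 0 ≤ h 1 := hmono (by norm_num) (by norm_num) (by norm_num)
  have h0 : h 0 = J x := by simp [hdef]
  have h1 : h 1 = J y - (inner ℝ (gradient J x) v : ℝ) + L * ‖v‖ ^ 2 / 2 := by
    simp [hdef, hv]
  rw [h0, h1] at h01
  have : L / 2 * ‖v‖ ^ 2 = L * ‖v‖ ^ 2 / 2 := by ring
  linarith [h01]

/-- Descent inequality for one step of projected gradient ascent with an inexact gradient:
with `θ_{k+1} = Proj_Θ(θ_k + α_k g_k)`,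
`J(θ_k) - J(θ_{k+1}) ≤ L α_k ‖∇J(θ_k) - g_k‖ - α_k ‖P_Θ(θ_k, ∇J(θ_k), α_k)‖² + (L α_k²/2)‖g_k‖²`. -/
theorem projected_ascent_descent_ineq {d : ℕ}
    (Θ : Set (EuclideanSpace ℝ (Fin d)))
    (hne : Θ.Nonempty) (hcl : IsClosed Θ) (hconv : Convex ℝ Θ)
    (Proj : EuclideanSpace ℝ (Fin d) → EuclideanSpace ℝ (Fin d))
    (hProj_mem : ∀ x, Proj x ∈ Θ)
    (hProj_char : ∀ x, ∀ y ∈ Θ, inner ℝ (x - Proj x) (y - Proj x) ≤ (0 : ℝ))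
    (J : EuclideanSpace ℝ (Fin d) → ℝ) (hJ : Differentiable ℝ J)
    (L : ℝ) (hL : 0 < L)
    (hgrad_lip : ∀ x y, ‖gradient J x - gradient J y‖ ≤ L * ‖x - y‖)
    (hgrad_bdd : ∀ x ∈ Θ, ‖gradient J x‖ ≤ L)
    (θk : EuclideanSpace ℝ (Fin d)) (hθk : θk ∈ Θ)
    (αk : ℝ) (hαk : 0 < αk) (gk : EuclideanSpace ℝ (Fin d)) :
    J θk - J (Proj (θk + αk • gk)) ≤
      L * αk * ‖gradient J θk - gk‖ -
        αk * ‖(αk⁻¹ : ℝ) • (Proj (θk + αk • gradient J θk) - θk)‖ ^ 2 +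
          L * αk ^ 2 / 2 * ‖gk‖ ^ 2 := by
  have hα0 : αk ≠ 0 := ne_of_gt hαk
  set G := gradient J θk with hG
  set Pg : EuclideanSpace ℝ (Fin d) := (αk⁻¹ : ℝ) • (Proj (θk + αk • gk) - θk) with hPg
  set PG : EuclideanSpace ℝ (Fin d) := (αk⁻¹ : ℝ) • (Proj (θk + αk • G) - θk) with hPG
  -- basic identities
  have hsg : Proj (θk + αk • gk) - θk = αk • Pg := by
    rw [hPg, smul_smul, mul_inv_cancel₀ hα0, one_smul]
  -- key projection inequality: ⟪f, P f⟫ ≥ ‖P f‖²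
  have hkey : ∀ f : EuclideanSpace ℝ (Fin d),
      ‖(αk⁻¹ : ℝ) • (Proj (θk + αk • f) - θk)‖ ^ 2 ≤
        (inner ℝ f ((αk⁻¹ : ℝ) • (Proj (θk + αk • f) - θk)) : ℝ) := by
    intro f
    set P : EuclideanSpace ℝ (Fin d) := (αk⁻¹ : ℝ) • (Proj (θk + αk • f) - θk) with hP
    have hs : Proj (θk + αk • f) - θk = αk • P := by
      rw [hP, smul_smul, mul_inv_cancel₀ hα0, one_smul]
    have hchar := hProj_char (θk + αk • f) θk hθk
    have e1 : θk + αk • f - Proj (θk + αk • f) = αk • (f - P) := by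
      rw [smul_sub, ← hs]; abel
    have e2 : θk - Proj (θk + αk • f) = -(αk • P) := by
      rw [← hs]; abel
    rw [e1, e2] at hchar
    have hc2 : (inner ℝ ((αk:ℝ) • (f - P)) (-(αk • P)) : ℝ)
        = -(αk * αk * (inner ℝ (f - P) P : ℝ)) := by
      rw [inner_neg_right, real_inner_smul_left, real_inner_smul_right]; ring
    rw [hc2] at hchar
    have hinner : (0:ℝ) ≤ (inner ℝ (f - P) P : ℝ) := by nlinarith [mul_pos hαk hαk]
    rw [inner_sub_left] at hinner
    rw [← real_inner_self_eq_norm_sq]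
    linarith
  -- nonexpansiveness of Proj
  have hnonexp : ∀ a b : EuclideanSpace ℝ (Fin d), ‖Proj a - Proj b‖ ≤ ‖a - b‖ := by
    intro a b
    have h1 := hProj_char a (Proj b) (hProj_mem b)
    have h2 := hProj_char b (Proj a) (hProj_mem a)
    have h2' : (inner ℝ (b - Proj b) (-(Proj b - Proj a)) : ℝ) ≤ 0 := by
      have he : Proj a - Proj b = -(Proj b - Proj a) := by abel
      rw [← he]; exact h2
    rw [inner_neg_right] at h2'
    have hsum : (inner ℝ ((a - Proj a) - (b - Proj b)) (Proj b - Proj a) : ℝ) ≤ 0 := by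
      rw [inner_sub_left]; linarith
    have hre : (a - Proj a) - (b - Proj b) = (a - b) - (Proj a - Proj b) := by abel
    rw [hre] at hsum
    have hq : Proj b - Proj a = -(Proj a - Proj b) := by abel
    rw [hq, inner_neg_right, inner_sub_left] at hsum
    have hns : ‖Proj a - Proj b‖ ^ 2 ≤ (inner ℝ (a - b) (Proj a - Proj b) : ℝ) := by
      rw [← real_inner_self_eq_norm_sq]; linarith
    have hcs : (inner ℝ (a - b) (Proj a - Proj b) : ℝ) ≤ ‖a - b‖ * ‖Proj a - Proj b‖ :=
      real_inner_le_norm _ _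
    nlinarith [norm_nonneg (Proj a - Proj b), norm_nonneg (a - b)]
  -- descent lemma
  have hdesc := descent_lemma_aux J hJ L hL hgrad_lip θk (Proj (θk + αk • gk))
  rw [hsg] at hdesc
  have hinstep : (inner ℝ G (αk • Pg) : ℝ) = αk * (inner ℝ G Pg : ℝ) := real_inner_smul_right _ _ _
  have hnstep : ‖(αk:ℝ) • Pg‖ ^ 2 = αk ^ 2 * ‖Pg‖ ^ 2 := by
    rw [norm_smul, Real.norm_eq_abs, abs_of_pos hαk, mul_pow]
  rw [hinstep, hnstep] at hdesc
  -- ‖Pg‖ ≤ ‖gk‖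
  have hPg_le : ‖Pg‖ ≤ ‖gk‖ := by
    have h1 := hkey gk
    rw [← hPg] at h1
    have h2 : (inner ℝ gk Pg : ℝ) ≤ ‖gk‖ * ‖Pg‖ := real_inner_le_norm _ _
    nlinarith [norm_nonneg Pg, norm_nonneg gk]
  -- ‖Pg - PG‖ ≤ ‖G - gk‖
  have hPdiff : ‖Pg - PG‖ ≤ ‖G - gk‖ := by
    have h1 : Pg - PG = (αk⁻¹ : ℝ) • (Proj (θk + αk • gk) - Proj (θk + αk • G)) := by
      rw [hPg, hPG, ← smul_sub]
      congr 1
      abel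
    rw [h1, norm_smul, Real.norm_eq_abs, abs_of_pos (inv_pos.mpr hαk)]
    have h2 : ‖Proj (θk + αk • gk) - Proj (θk + αk • G)‖ ≤ ‖(θk + αk • gk) - (θk + αk • G)‖ :=
      hnonexp _ _
    have h3 : (θk + αk • gk) - (θk + αk • G) = αk • (gk - G) := by
      rw [smul_sub]; abel
    rw [h3, norm_smul, Real.norm_eq_abs, abs_of_pos hαk] at h2
    have h4 : ‖gk - G‖ = ‖G - gk‖ := norm_sub_rev _ _
    calc αk⁻¹ * ‖Proj (θk + αk • gk) - Proj (θk + αk • G)‖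
        ≤ αk⁻¹ * (αk * ‖gk - G‖) :=
          mul_le_mul_of_nonneg_left h2 (le_of_lt (inv_pos.mpr hαk))
      _ = ‖G - gk‖ := by rw [h4]; field_simp
  -- -⟪G, Pg⟫ ≤ -‖PG‖² + L‖G - gk‖
  have hGbdd : ‖G‖ ≤ L := hgrad_bdd θk hθk
  have hmain : -(inner ℝ G Pg : ℝ) ≤ -‖PG‖ ^ 2 + L * ‖G - gk‖ := by
    have h1 : (inner ℝ G Pg : ℝ) = (inner ℝ G PG : ℝ) + (inner ℝ G (Pg - PG) : ℝ) := by
      rw [inner_sub_right]; ring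
    have h2 := hkey G
    rw [← hPG] at h2
    have h3 : |(inner ℝ G (Pg - PG) : ℝ)| ≤ ‖G‖ * ‖Pg - PG‖ := abs_real_inner_le_norm _ _
    have h4 : ‖G‖ * ‖Pg - PG‖ ≤ L * ‖G - gk‖ :=
      mul_le_mul hGbdd hPdiff (norm_nonneg _) (le_of_lt hL)
    have h5 := abs_le.mp h3
    linarith [h5.1, h5.2]
  -- combine
  have hPgsq : ‖Pg‖ ^ 2 ≤ ‖gk‖ ^ 2 := pow_le_pow_left₀ (norm_nonneg Pg) hPg_le 2
  have t1 := mul_le_mul_of_nonneg_left hmain hαk.le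
  have hc : (0:ℝ) ≤ L * αk ^ 2 / 2 := by positivity
  have t2 := mul_le_mul_of_nonneg_left hPgsq hc
  have e1 : -(αk * (inner ℝ G Pg : ℝ)) = αk * (-(inner ℝ G Pg : ℝ)) := by ring
  have e3 : αk * (-‖PG‖ ^ 2 + L * ‖G - gk‖) = L * αk * ‖G - gk‖ - αk * ‖PG‖ ^ 2 := by ring
  linarith [t1, t2]
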